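/- Mortal Matrix reduction for satisfiability: Fix d, n ≥ 1 and matrices X₁, …, Xₙ ∈ ℤ^{d×d}, and let R be the semiring (ℤ^{d×d}, +, ·, 0_d, 1_d) of d×d integer matrices. Consider the AC-program Π consisting of the facts p(X₁) ←, …, p(Xₙ) ←, the constraint rule ⊥ ← ¬p(0_d), and the rule p(Y) ← p(Z₁), p(Z₂), Y =_R Z₁ * Z₂. Then Π has an equilibrium model if and only if there exist k ≥ 1 and indices i₁, …, i_k ∈ {1, …, n} with X_{i₁} · X_{i₂} ⋯ X_{i_k} = 0_d. -/

import Mathlib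

/-- The two worlds of HT logic. -/
inductive W : Type | H | T
deriving DecidableEq

/-- `W.le w w'` means `w' ≥ w` in the HT order (with `T ≥ H`). -/
def W.le : W → W → Prop
  | .H, _ => True
  | .T, w' => w' = .T

/-- An HT-interpretation: a pair of sets of (variable-free) atoms with `h ⊆ t`. -/
structure HTI (A : Type*) where
  h : Set A
  t : Set A
  sub : h ⊆ t

/-- The component of a pointed HT-interpretation at world `w`. -/
def HTI.at {A : Type*} (I : HTI A) : W → Set A
  | .H => I.h
  | .T => I.t

/-- Semiring terms built from constants and (global) variables by `+` and `*`. -/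
inductive Trm (R : Type) (g : ℕ) : Type
  | const (k : R)
  | var (x : Fin g)
  | add (s t : Trm R g)
  | mul (s t : Trm R g)

/-- Evaluation of a term under an assignment of the global variables. -/
def Trm.eval {R : Type} [Semiring R] {g : ℕ} (γ : Fin g → R) : Trm R g → R
  | .const k => k
  | .var x => γ x
  | .add s t => s.eval γ + t.eval γ
  | .mul s t => s.eval γ * t.eval γ

/-- Variable-free atoms (the domain being the semiring carrier `R`). -/
abbrev GAtom (P R : Type) : Type := P × List R

/-- Instantiating the arguments of an atom with an assignment `γ`. -/
def instA {P R : Type} {g : ℕ} (γ : Fin g → R) (a : P × List (Fin g ⊕ R)) :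
    GAtom P R :=
  (a.1, a.2.map (Sum.elim γ id))

/-- An `AC`-rule `φ ← ψ₁, …, ψₙ, ¬θ₁, …, ¬θ_m` whose head is an atom or `⊥`
    (`none`), with body atoms, negated body atoms, and body algebraic constraints
    that are equalities between semiring terms; its `g` global variables are
    universally quantified over the carrier `R`. -/
structure NRule (P R : Type) : Type where
  g : ℕ
  head : Option (P × List (Fin g ⊕ R))
  pos : List (P × List (Fin g ⊕ R))
  neg : List (P × List (Fin g ⊕ R))
  eqs : List (Trm R g × Trm R g)

/-- HT satisfaction of a rule at `I_w` (`¬θ = θ → ⊥` is satisfied at `I_{w'}` iff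
    `θ` fails at every `w'' ≥ w'`). -/
def NRule.sat {P R : Type} [Semiring R] (I : HTI (GAtom P R)) (w : W)
    (r : NRule P R) : Prop :=
  ∀ γ : Fin r.g → R, ∀ w', W.le w w' →
    ((∀ a ∈ r.pos, instA γ a ∈ I.at w') ∧
      (∀ a ∈ r.neg, ∀ w'', W.le w' w'' → instA γ a ∉ I.at w'') ∧
      (∀ e ∈ r.eqs, Trm.eval γ e.1 = Trm.eval γ e.2)) →
    (match r.head with
      | some a => instA γ a ∈ I.at w'
      | none => False)

/-- HT satisfaction of a program. -/
def progSat {P R : Type} [Semiring R] (Pr : Set (NRule P R))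
    (I : HTI (GAtom P R)) (w : W) : Prop :=
  ∀ r ∈ Pr, r.sat I w

/-- `J` is an equilibrium model of `Pr`. -/
def EqModel {P R : Type} [Semiring R] (Pr : Set (NRule P R))
    (J : Set (GAtom P R)) : Prop :=
  progSat Pr ⟨J, J, le_refl J⟩ .H ∧
    ∀ J' (h : J' ⊆ J), J' ≠ J → ¬ progSat Pr ⟨J', J, h⟩ .H

section MortalMatrix

/-- The semiring `(ℤ^{d×d}, +, ·, 0_d, 1_d)` of `d×d` integer matrices. -/
abbrev MatR (d : ℕ) : Type := Matrix (Fin d) (Fin d) ℤ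

variable {d n : ℕ}

/-- The fact `p(m) ←`. -/
def factRule (m : MatR d) : NRule Unit (MatR d) :=
  ⟨0, some ((), [Sum.inr m]), [], [], []⟩

/-- The constraint rule `⊥ ← ¬p(0_d)`. -/
def botRule (d : ℕ) : NRule Unit (MatR d) :=
  ⟨0, none, [], [((), [Sum.inr (0 : MatR d)])], []⟩

/-- The rule `p(Y) ← p(Z₁), p(Z₂), Y =_R Z₁ * Z₂`. -/
def prodRule (d : ℕ) : NRule Unit (MatR d) :=
  ⟨3, some ((), [Sum.inl 0]), [((), [Sum.inl 1]), ((), [Sum.inl 2])], [],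
    [(Trm.var 0, Trm.mul (Trm.var 1) (Trm.var 2))]⟩

/-- The `AC`-program `Π` of the Mortal Matrix reduction. -/
def mortalProg (X : Fin n → MatR d) : Set (NRule Unit (MatR d)) :=
  {r | ∃ i : Fin n, r = factRule (X i)} ∪ {botRule d, prodRule d}

-- Semigroup closure of the `X i` under multiplication.
inductive Cl {d n : ℕ} (X : Fin n → MatR d) : MatR d → Prop
  | base (i : Fin n) : Cl X (X i)
  | mul {a b : MatR d} : Cl X a → Cl X b → Cl X (a * b)

lemma cl_iff_list {d n : ℕ} (X : Fin n → MatR d) (m : MatR d) :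
    Cl X m ↔ ∃ l : List (Fin n), l ≠ [] ∧ (l.map X).prod = m := by
  constructor
  · intro h
    induction h with
    | base i => exact ⟨[i], by simp, by simp⟩
    | mul _ _ ih1 ih2 =>
      obtain ⟨l1, h1, e1⟩ := ih1
      obtain ⟨l2, h2, e2⟩ := ih2
      exact ⟨l1 ++ l2, by simp [h1], by simp [e1, e2]⟩
  · rintro ⟨l, hl, rfl⟩
    induction l with
    | nil => simp at hl
    | cons a l ih =>
      cases l with
      | nil => simpa using Cl.base a
      | cons b l' => simpa using Cl.mul (Cl.base a) (ih (by simp))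

lemma cl_iff_fin {d n : ℕ} (X : Fin n → MatR d) (m : MatR d) :
    Cl X m ↔ ∃ k : ℕ, 1 ≤ k ∧ ∃ f : Fin k → Fin n,
      (List.ofFn fun j => X (f j)).prod = m := by
  rw [cl_iff_list]
  constructor
  · rintro ⟨l, hl, rfl⟩
    refine ⟨l.length, Nat.one_le_iff_ne_zero.2 (by simpa using hl), l.get, ?_⟩
    have : (List.ofFn fun j => X (l.get j)) = l.map X := by
      rw [show (fun j => X (l.get j)) = X ∘ l.get from rfl, ← List.map_ofFn,
        List.ofFn_get]
    rw [this]
  · rintro ⟨k, hk, f, rfl⟩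
    refine ⟨List.ofFn f, ?_, ?_⟩
    · simp only [ne_eq, List.ofFn_eq_nil_iff]; omega
    · rw [List.map_ofFn]; rfl

/-- The atom set corresponding to the closure. -/
def Sset {d n : ℕ} (X : Fin n → MatR d) : Set (GAtom Unit (MatR d)) :=
  {a | ∃ m, Cl X m ∧ a = ((), [m])}

lemma mem_Sset {d n : ℕ} {X : Fin n → MatR d} {m : MatR d} :
    ((), [m]) ∈ Sset X ↔ Cl X m := by
  constructor
  · rintro ⟨m', hm', heq⟩
    obtain rfl : m = m' := by simpa [Prod.ext_iff] using heq
    exact hm'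
  · intro h; exact ⟨m, h, rfl⟩

/-- Being closed under the product rule. -/
def MClosed {d : ℕ} (J : Set (GAtom Unit (MatR d))) : Prop :=
  ∀ a b : MatR d, ((), [a]) ∈ J → ((), [b]) ∈ J → ((), [a * b]) ∈ J

lemma progSat_of {d n : ℕ} (X : Fin n → MatR d)
    (Jl Jt : Set (GAtom Unit (MatR d))) (hsub : Jl ⊆ Jt)
    (h0 : ((), [(0 : MatR d)]) ∈ Jt)
    (hfl : ∀ i, ((), [X i]) ∈ Jl)
    (hml : MClosed Jl) (hmt : MClosed Jt) :
    progSat (mortalProg X) ⟨Jl, Jt, hsub⟩ .H := by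
  intro r hr
  rcases hr with ⟨i, rfl⟩ | hr
  · -- fact rule
    intro γ w' _ _
    cases w' <;> simp only [factRule, instA, HTI.at, List.map_cons, List.map_nil,
      Sum.elim_inr]
    · exact hfl i
    · exact hsub (hfl i)
  · simp only [Set.mem_insert_iff, Set.mem_singleton_iff] at hr
    rcases hr with rfl | rfl
    · -- bot rule
      rintro γ w' _ ⟨-, hneg, -⟩
      have := hneg ((), [Sum.inr (0 : MatR d)]) (List.mem_singleton.2 rfl) .T
        (by cases w' <;> trivial)
      simp only [instA, HTI.at, List.map_cons, List.map_nil, Sum.elim_inr] at this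
      exact (this h0).elim
    · -- product rule
      simp only [NRule.sat, prodRule]
      rintro γ w' _ ⟨hpos, -, heqs⟩
      have h1 := hpos ((), [Sum.inl 1]) (List.mem_cons.2 (Or.inl rfl))
      have h2 := hpos ((), [Sum.inl 2]) (List.mem_cons.2 (Or.inr (List.mem_singleton.2 rfl)))
      have he : γ 0 = γ 1 * γ 2 := by
        simpa [Trm.eval] using heqs (Trm.var 0, Trm.mul (Trm.var 1) (Trm.var 2))
          (List.mem_singleton.2 rfl)
      simp only [instA, List.map_cons, List.map_nil, Sum.elim_inl] at h1 h2 ⊢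
      cases w' <;> simp only [prodRule, HTI.at] at h1 h2 ⊢ <;> rw [he]
      · exact hml _ _ h1 h2
      · exact hmt _ _ h1 h2

lemma of_progSat {d n : ℕ} (X : Fin n → MatR d)
    {Jl Jt : Set (GAtom Unit (MatR d))} {hsub : Jl ⊆ Jt}
    (h : progSat (mortalProg X) ⟨Jl, Jt, hsub⟩ .H) :
    ((), [(0 : MatR d)]) ∈ Jt ∧ (∀ m, Cl X m → ((), [m]) ∈ Jl) ∧ MClosed Jt := by
  have hfact : ∀ i : Fin n, ((), [X i]) ∈ Jl := by
    intro i
    have := h (factRule (X i)) (Or.inl ⟨i, rfl⟩) (fun x => x.elim0) .H trivial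
      ⟨(by intro _ h; cases h), (by intro _ h; cases h), (by intro _ h; cases h)⟩
    simpa [factRule, instA, HTI.at] using this
  have hprod : ∀ w' : W, ∀ a b : MatR d,
      (((), [a]) ∈ (⟨Jl, Jt, hsub⟩ : HTI (GAtom Unit (MatR d))).at w') →
      (((), [b]) ∈ (⟨Jl, Jt, hsub⟩ : HTI (GAtom Unit (MatR d))).at w') →
      ((), [a * b]) ∈ (⟨Jl, Jt, hsub⟩ : HTI (GAtom Unit (MatR d))).at w' := by
    intro w' a b ha hb
    have := h (prodRule d) (Or.inr (Or.inr rfl)) ![a * b, a, b] w'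
      (by cases w' <;> trivial) ?_
    · simpa [prodRule, instA] using this
    · refine ⟨?_, (by intro _ h; cases h), ?_⟩
      · intro x hx
        rcases List.mem_cons.1 hx with rfl | hx
        · simpa [instA]
        · obtain rfl := List.mem_singleton.1 hx; simpa [instA]
      · intro e he'
        simp only [prodRule, List.mem_cons, List.not_mem_nil, or_false] at he'
        obtain rfl := List.mem_singleton.1 he'
        simp [Trm.eval]
  refine ⟨?_, ?_, ?_⟩
  · by_contra h0
    refine h (botRule d) (Or.inr (Or.inl rfl)) (fun x => x.elim0) .H trivial
      ⟨(by intro _ h; cases h), ?_, (by intro _ h; cases h)⟩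
    intro a ha w'' _
    simp only [botRule, List.mem_cons, List.not_mem_nil, or_false] at ha
    obtain rfl := List.mem_singleton.1 ha
    intro hmem
    apply h0
    cases w''
    · exact hsub hmem
    · exact hmem
  · intro m hm
    induction hm with
    | base i => exact hfact i
    | mul ha hb iha ihb => exact hprod .H _ _ iha ihb
  · intro a b ha hb
    exact hprod .T a b ha hb

/-- **Mortal Matrix reduction for satisfiability**: for `d, n ≥ 1` and matrices
    `X₁, …, Xₙ ∈ ℤ^{d×d}`, the program consisting of the facts `p(Xᵢ) ←`, the
    constraint rule `⊥ ← ¬p(0_d)` and the rule `p(Y) ← p(Z₁), p(Z₂), Y =_R Z₁ * Z₂`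
    has an equilibrium model iff some nonempty product of the matrices is `0_d`. -/
theorem mortal_matrix_sat (hd : 1 ≤ d) (hn : 1 ≤ n) (X : Fin n → MatR d) :
    (∃ I : Set (GAtom Unit (MatR d)), EqModel (mortalProg X) I) ↔
      ∃ k : ℕ, 1 ≤ k ∧ ∃ f : Fin k → Fin n,
        (List.ofFn fun j => X (f j)).prod = (0 : MatR d) := by
  rw [← cl_iff_fin]
  constructor
  · rintro ⟨I, hI, hmin⟩
    obtain ⟨h0, hcl, hmt⟩ := of_progSat X hI
    have hsub : Sset X ⊆ I := by rintro a ⟨m, hm, rfl⟩; exact hcl m hm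
    have hsat : progSat (mortalProg X) ⟨Sset X, I, hsub⟩ .H :=
      progSat_of X _ _ hsub h0 (fun i => mem_Sset.2 (Cl.base i))
        (fun a b ha hb => mem_Sset.2 (Cl.mul (mem_Sset.1 ha) (mem_Sset.1 hb)))
        (fun a b ha hb => hmt a b ha hb)
    by_cases he : Sset X = I
    · rw [← he] at h0; exact mem_Sset.1 h0
    · exact absurd hsat (hmin _ hsub he)
  · intro h0
    have hcl : MClosed (Sset X) :=
      fun a b ha hb => mem_Sset.2 (Cl.mul (mem_Sset.1 ha) (mem_Sset.1 hb))
    refine ⟨Sset X, progSat_of X _ _ (le_refl _) (mem_Sset.2 h0)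
      (fun i => mem_Sset.2 (Cl.base i)) hcl hcl, ?_⟩
    intro J' hsub hne hsat
    obtain ⟨-, hcl', -⟩ := of_progSat X hsat
    exact hne (Set.Subset.antisymm hsub (by rintro a ⟨m, hm, rfl⟩; exact hcl' m hm))

end MortalMatrix
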